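/- arXiv:1010.3813 — 5 statements merged into one kernel-verified Lean document; each statement's English description precedes it below -/
import Mathlib

section
/- For any matrices: if S is a d×d real positive definite matrix, then the minimum of Tr(S G^{-1}) over all d×d real positive definite matrices G with Tr G = 1 equals (Tr √S)², and the minimum is attained exactly when G = √S / Tr √S. -/
open Matrix

open scoped Classical in
noncomputable def msqrt {d : ℕ} (A : Matrix (Fin d) (Fin d) ℝ) : Matrix (Fin d) (Fin d) ℝ :=
  if h : A.PosSemidef then
    (h.1.eigenvectorUnitary : Matrix (Fin d) (Fin d) ℝ) *
      diagonal (((↑) : ℝ → ℝ) ∘ (fun x => Real.sqrt x) ∘ h.1.eigenvalues) *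
      (star h.1.eigenvectorUnitary : Matrix (Fin d) (Fin d) ℝ) else 0

noncomputable def Matrix.PosSemidef.sqrt {d : ℕ} {A : Matrix (Fin d) (Fin d) ℝ}
    (h : A.PosSemidef) : Matrix (Fin d) (Fin d) ℝ :=
  (h.1.eigenvectorUnitary : Matrix (Fin d) (Fin d) ℝ) *
    diagonal (((↑) : ℝ → ℝ) ∘ (fun x => Real.sqrt x) ∘ h.1.eigenvalues) *
    (star h.1.eigenvectorUnitary : Matrix (Fin d) (Fin d) ℝ)

lemma Matrix.PosSemidef.sqrt_mul_self {d : ℕ} {A : Matrix (Fin d) (Fin d) ℝ}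
    (h : A.PosSemidef) : h.sqrt * h.sqrt = A := by
  set U := (h.1.eigenvectorUnitary : Matrix (Fin d) (Fin d) ℝ) with hUdef
  have hU : (star h.1.eigenvectorUnitary : Matrix (Fin d) (Fin d) ℝ) * U = 1 :=
    Unitary.coe_star_mul_self _
  have key : ∀ D : Matrix (Fin d) (Fin d) ℝ,
      U * D * (star h.1.eigenvectorUnitary : Matrix (Fin d) (Fin d) ℝ) *
        (U * D * (star h.1.eigenvectorUnitary : Matrix (Fin d) (Fin d) ℝ)) =
      U * (D * ((star h.1.eigenvectorUnitary : Matrix (Fin d) (Fin d) ℝ) * U) * D) *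
        (star h.1.eigenvectorUnitary : Matrix (Fin d) (Fin d) ℝ) := by
    intro D; simp only [Matrix.mul_assoc]
  conv_rhs => rw [h.1.spectral_theorem, Unitary.conjStarAlgAut_apply]
  rw [Matrix.PosSemidef.sqrt, key, hU, Matrix.mul_one, diagonal_mul_diagonal]
  congr 2
  congr 1
  funext i
  simp [Real.mul_self_sqrt (h.eigenvalues_nonneg i)]

lemma msqrt_eq {d : ℕ} {A : Matrix (Fin d) (Fin d) ℝ} (h : A.PosSemidef) :
    msqrt A = h.sqrt := by
  classical
  rw [msqrt, dif_pos h]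
  rfl

lemma psd_transpose_eq {d : ℕ} {B : Matrix (Fin d) (Fin d) ℝ} (h : B.PosSemidef) : Bᵀ = B := by
  have := h.isHermitian
  rwa [Matrix.IsHermitian, conjTranspose_eq_transpose_of_trivial] at this

lemma sqrt_posDef {d : ℕ} {S : Matrix (Fin d) (Fin d) ℝ} (hS : S.PosDef) :
    (hS.posSemidef.sqrt).PosDef := by
  rw [Matrix.PosSemidef.sqrt]
  set U := (hS.posSemidef.1.eigenvectorUnitary : Matrix (Fin d) (Fin d) ℝ) with hUdef
  have hU : U * (star hS.posSemidef.1.eigenvectorUnitary : Matrix (Fin d) (Fin d) ℝ) = 1 :=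
    Unitary.coe_mul_star_self _
  rw [star_eq_conjTranspose]
  refine Matrix.PosDef.mul_mul_conjTranspose_same ?_ ?_
  · rw [posDef_diagonal_iff]
    intro i
    simpa using hS.eigenvalues_pos i
  · intro v w hvw
    have := congrArg (fun x => x ᵥ* Uᴴ) hvw
    simp only [vecMul_vecMul] at this
    rwa [← star_eq_conjTranspose, hU, vecMul_one, vecMul_one] at this

lemma posdef_trace_pos {d : ℕ} {A : Matrix (Fin d) (Fin d) ℝ} (hA : A.PosDef) (hd : 0 < d) :
    0 < A.trace := by
  have : ∀ i, 0 < A i i := by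
    intro i
    have hx : (Pi.single i 1 : Fin d → ℝ) ≠ 0 := by
      intro h
      have := congrFun h i
      simp at this
    have := hA.dotProduct_mulVec_pos hx
    simpa [dotProduct, mulVec, Pi.single_apply, Finset.mul_sum] using this
  rw [Matrix.trace]
  exact Finset.sum_pos (fun i _ => this i) (by simp [Finset.univ_nonempty_iff, Fin.pos_iff_nonempty.mp hd])

lemma trace_mul_transpose_nonneg {d : ℕ} (D : Matrix (Fin d) (Fin d) ℝ) :
    0 ≤ (D * Dᵀ).trace := by
  have : (D * Dᵀ).trace = ∑ i, ∑ j, (D i j)^2 := by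
    simp [Matrix.trace, Matrix.mul_apply, Matrix.diag, sq]
  rw [this]
  positivity

lemma trace_mul_transpose_eq_zero {d : ℕ} (D : Matrix (Fin d) (Fin d) ℝ)
    (h : (D * Dᵀ).trace = 0) : D = 0 := by
  have hs : (D * Dᵀ).trace = ∑ i, ∑ j, (D i j)^2 := by
    simp [Matrix.trace, Matrix.mul_apply, Matrix.diag, sq]
  rw [hs] at h
  ext i j
  have h1 : ∀ i ∈ Finset.univ, (0:ℝ) ≤ ∑ j, (D i j)^2 :=
    fun i _ => Finset.sum_nonneg fun j _ => sq_nonneg _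
  have h2 := (Finset.sum_eq_zero_iff_of_nonneg h1).mp h i (Finset.mem_univ i)
  have h3 := (Finset.sum_eq_zero_iff_of_nonneg (fun j _ => sq_nonneg (D i j))).mp h2 j (Finset.mem_univ j)
  simpa using pow_eq_zero_iff (n := 2) (by norm_num) |>.mp h3

/-- For a `d × d` real positive definite matrix `S`, the minimum of `Tr (S G⁻¹)` over all
`d × d` real positive definite matrices `G` with `Tr G = 1` equals `(Tr √S)²`, and the
minimum is attained exactly when `G = √S / Tr √S`. -/
theorem stmt0 {d : ℕ} (S : Matrix (Fin d) (Fin d) ℝ) (hS : S.PosDef) :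
    (∀ G : Matrix (Fin d) (Fin d) ℝ, G.PosDef → G.trace = 1 →
      ((msqrt S).trace) ^ 2 ≤ (S * G⁻¹).trace) ∧
    (∀ G : Matrix (Fin d) (Fin d) ℝ, G.PosDef → G.trace = 1 →
      ((S * G⁻¹).trace = ((msqrt S).trace) ^ 2 ↔ G = ((msqrt S).trace)⁻¹ • msqrt S)) := by
  have key : ∀ G : Matrix (Fin d) (Fin d) ℝ, G.PosDef → G.trace = 1 →
      ((msqrt S).trace) ^ 2 ≤ (S * G⁻¹).trace ∧
      ((S * G⁻¹).trace = ((msqrt S).trace) ^ 2 ↔ G = ((msqrt S).trace)⁻¹ • msqrt S) := by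
    intro G hG hG1
    have hd : 0 < d := by
      rcases Nat.eq_zero_or_pos d with h | h
      · exfalso; subst h
        rw [Matrix.trace] at hG1
        simp at hG1
      · exact h
    set A := hS.posSemidef.sqrt with hAdef
    have hmsqrt : msqrt S = A := msqrt_eq hS.posSemidef
    have hApd : A.PosDef := sqrt_posDef hS
    have hAA : A * A = S := hS.posSemidef.sqrt_mul_self
    have hAt : Aᵀ = A := psd_transpose_eq hApd.posSemidef
    set c := A.trace with hcdef
    have hc : 0 < c := posdef_trace_pos hApd hd
    set B := hG.posSemidef.sqrt with hBdef
    have hBpd : B.PosDef := sqrt_posDef hG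
    have hBB : B * B = G := hG.posSemidef.sqrt_mul_self
    have hBt : Bᵀ = B := psd_transpose_eq hBpd.posSemidef
    have hBdet : IsUnit B.det := hBpd.det_pos.ne'.isUnit
    have hB1 : B * B⁻¹ = 1 := mul_nonsing_inv B hBdet
    have hB2 : B⁻¹ * B = 1 := nonsing_inv_mul B hBdet
    have hGinv : G⁻¹ = B⁻¹ * B⁻¹ := by rw [← hBB, Matrix.mul_inv_rev]
    have hBit : (B⁻¹)ᵀ = B⁻¹ := by rw [transpose_nonsing_inv, hBt]
    set D := A * B⁻¹ - c • B with hDdef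
    have hDt : Dᵀ = B⁻¹ * A - c • B := by
      rw [hDdef, transpose_sub, transpose_mul, transpose_smul, hAt, hBt, hBit]
    have hkey : (S * G⁻¹).trace = c ^ 2 + (D * Dᵀ).trace := by
      have expand : D * Dᵀ = A * B⁻¹ * (B⁻¹ * A) - c • (A * B⁻¹ * B) - c • (B * (B⁻¹ * A))
          + (c * c) • (B * B) := by
        rw [hDdef, hDt]
        rw [sub_mul, mul_sub, mul_sub, smul_mul_assoc, mul_smul_comm, mul_smul_comm,
          smul_mul_assoc, smul_smul]
        ring_nf
        abel
      have e1 : A * B⁻¹ * B = A := by rw [Matrix.mul_assoc, hB2, Matrix.mul_one]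
      have e2 : B * (B⁻¹ * A) = A := by rw [← Matrix.mul_assoc, hB1, Matrix.one_mul]
      have e3 : (A * B⁻¹ * (B⁻¹ * A)).trace = (S * G⁻¹).trace := by
        rw [hGinv, ← hAA]
        calc (A * B⁻¹ * (B⁻¹ * A)).trace
            = ((A * (B⁻¹ * B⁻¹)) * A).trace := by
              rw [Matrix.mul_assoc, Matrix.mul_assoc, Matrix.mul_assoc]
          _ = (A * (A * (B⁻¹ * B⁻¹))).trace := trace_mul_comm _ _
          _ = (A * A * (B⁻¹ * B⁻¹)).trace := by rw [Matrix.mul_assoc]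
      rw [expand]
      rw [trace_add, trace_sub, trace_sub, trace_smul, trace_smul, trace_smul, e1, e2, e3,
        hBB, hG1]
      simp only [smul_eq_mul, mul_one, ← hcdef]
      ring
    constructor
    · rw [hmsqrt, ← hcdef, hkey]
      have := trace_mul_transpose_nonneg D
      linarith
    · rw [hmsqrt, ← hcdef, hkey]
      constructor
      · intro h
        have hD0 : (D * Dᵀ).trace = 0 := by linarith
        have hD : D = 0 := trace_mul_transpose_eq_zero D hD0
        have hAB : A * B⁻¹ = c • B := by
          rw [hDdef] at hD
          exact sub_eq_zero.mp hD
        have hAcG : A = c • G := by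
          have h2 := congrArg (· * B) hAB
          simp only [smul_mul_assoc, hBB] at h2
          rw [Matrix.mul_assoc, hB2, Matrix.mul_one] at h2
          exact h2
        rw [hAcG, smul_smul, inv_mul_cancel₀ hc.ne', one_smul]
      · intro h
        have hAcG : A = c • G := by
          rw [h, smul_smul, mul_inv_cancel₀ hc.ne', one_smul]
        have hD : D = 0 := by
          rw [hDdef, hAcG, ← hBB, smul_mul_assoc, Matrix.mul_assoc, hB1, Matrix.mul_one,
            sub_self]
        rw [hD]
        simp
  exact ⟨fun G hG hG1 => (key G hG hG1).1, fun G hG hG1 => (key G hG hG1).2⟩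
end

section
/- Let ρ be a strictly positive density operator on a finite-dimensional Hilbert space H of dimension q, let ⟨A,B⟩_ρ = (1/2)Tr ρ(A*B+BA*), and let L¹,…,L^d be selfadjoint operators such that {L¹,…,L^d, I} is orthonormal with respect to ⟨·,·⟩_ρ. Then for any POVM M = (M₁,…,M_s) with each Tr ρM_n > 0, the matrix ĝ(M) = [Σ_n ⟨L^i, M_n⟩_ρ ⟨L^j, M_n⟩_ρ / ⟨I, M_n⟩_ρ]_{ij} satisfies Tr ĝ(M) ≤ q − 1. -/
open Matrix ComplexOrder


lemma diag_nonneg' {n : ℕ} {A : Matrix (Fin n) (Fin n) ℂ} (h : A.PosSemidef) (i : Fin n) :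
    0 ≤ A i i := by
  exact h.diag_nonneg

lemma psd_trace_nonneg {n : ℕ} {A : Matrix (Fin n) (Fin n) ℂ} (h : A.PosSemidef) :
    0 ≤ A.trace := Finset.sum_nonneg (fun i _ => diag_nonneg' h i)

lemma key_ineq {n : ℕ} {ρ M : Matrix (Fin n) (Fin n) ℂ} (hρ : ρ.PosSemidef)
    (hM : M.PosSemidef) :
    (ρ * (M * M)).trace ≤ M.trace * (ρ * M).trace := by
  classical
  have hMh : M.IsHermitian := hM.1
  set V : Matrix (Fin n) (Fin n) ℂ := (hMh.eigenvectorUnitary : Matrix (Fin n) (Fin n) ℂ) with hV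
  set μ : Fin n → ℝ := hMh.eigenvalues with hμ
  set D : Matrix (Fin n) (Fin n) ℂ := Matrix.diagonal (fun k => (μ k : ℂ)) with hD
  have hspec : M = V * D * Vᴴ := by
    have := hMh.spectral_theorem
    simpa [hV, hD, hμ, Matrix.star_eq_conjTranspose, Function.comp_def] using this
  have hVV : Vᴴ * V = 1 := by
    have h := hMh.eigenvectorUnitary.2
    rw [Matrix.mem_unitaryGroup_iff'] at h
    simpa [hV, Matrix.star_eq_conjTranspose] using h
  set ρ' : Matrix (Fin n) (Fin n) ℂ := Vᴴ * ρ * V with hρ'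
  have hρ'psd : ρ'.PosSemidef := by
    have := hρ.mul_mul_conjTranspose_same Vᴴ
    simpa [hρ'] using this
  have hdiag : ∀ k, 0 ≤ ρ' k k := fun k => diag_nonneg' hρ'psd k
  have htrD : ∀ (A : Matrix (Fin n) (Fin n) ℂ) (d : Fin n → ℂ),
      (A * Matrix.diagonal d).trace = ∑ k, A k k * d k := by
    intro A d
    simp [Matrix.trace, Matrix.diag, Matrix.mul_diagonal]
  have hcyc : ∀ (B : Matrix (Fin n) (Fin n) ℂ), (ρ * (V * B * Vᴴ)).trace = (ρ' * B).trace := by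
    intro B
    rw [show ρ * (V * B * Vᴴ) = (ρ * V * B) * Vᴴ from by simp only [Matrix.mul_assoc],
      Matrix.trace_mul_comm, hρ']
    simp only [Matrix.mul_assoc]
  have hMM : M * M = V * (D * D) * Vᴴ := by
    rw [hspec, show V * D * Vᴴ * (V * D * Vᴴ) = V * D * (Vᴴ * V) * (D * Vᴴ) from by
      simp only [Matrix.mul_assoc], hVV]
    simp only [Matrix.mul_one, Matrix.mul_assoc]
  have h1 : (ρ * M).trace = ∑ k, ρ' k k * (μ k : ℂ) := by
    conv_lhs => rw [hspec, hcyc D]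
    rw [hD, htrD]
  have h2 : (ρ * (M * M)).trace = ∑ k, ρ' k k * ((μ k : ℂ) * (μ k : ℂ)) := by
    rw [hMM, hcyc (D * D), hD, Matrix.diagonal_mul_diagonal, htrD]
  have h3 : M.trace = ∑ k, (μ k : ℂ) := by
    rw [hspec, Matrix.trace_mul_cycle, hVV, Matrix.one_mul, hD, Matrix.trace_diagonal]
  rw [h1, h2, h3, Finset.sum_mul_sum]
  apply Finset.sum_le_sum
  intro k _
  have hμC : ∀ j, (0:ℂ) ≤ (μ j : ℂ) := fun j => by
    rw [Complex.le_def]; simp [hM.eigenvalues_nonneg j]; exact hM.eigenvalues_nonneg j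
  have haμ : ∀ j, (0:ℂ) ≤ ρ' j j * (μ j:ℂ) := fun j => mul_nonneg (hdiag j) (hμC j)
  have hs : ρ' k k * (μ k:ℂ) ≤ ∑ j, ρ' j j * (μ j:ℂ) :=
    Finset.single_le_sum (fun j _ => haμ j) (Finset.mem_univ k)
  calc ρ' k k * ((μ k:ℂ) * (μ k:ℂ)) = (μ k:ℂ) * (ρ' k k * (μ k:ℂ)) := by ring
    _ ≤ (μ k:ℂ) * ∑ j, ρ' j j * (μ j:ℂ) := mul_le_mul_of_nonneg_left hs (hμC k)
    _ = ∑ j, (μ k:ℂ) * (ρ' j j * (μ j:ℂ)) := Finset.mul_sum _ _ _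


/-- Let `ρ` be a strictly positive density operator on a `q`-dimensional Hilbert space,
`⟨A,B⟩_ρ = (1/2)Tr ρ(A*B+BA*)`, and `L¹,…,L^d` selfadjoint operators such that
`{L¹,…,L^d, I}` is orthonormal with respect to `⟨·,·⟩_ρ`. Then for any POVM
`M = (M₁,…,M_s)` with each `Tr ρM_n > 0`, one has
`Tr ĝ(M) = Σᵢ Σ_n ⟨Lⁱ,M_n⟩_ρ²/⟨I,M_n⟩_ρ ≤ q − 1`. -/
theorem stmt10 {q d s : ℕ} (ρ : Matrix (Fin q) (Fin q) ℂ) (hρ : ρ.PosDef) (hρ1 : ρ.trace = 1)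
    (inn : Matrix (Fin q) (Fin q) ℂ → Matrix (Fin q) (Fin q) ℂ → ℂ)
    (hinn : ∀ A B, inn A B = (1 / 2 : ℂ) * (ρ * (Aᴴ * B + B * Aᴴ)).trace)
    (L : Fin d → Matrix (Fin q) (Fin q) ℂ) (hLh : ∀ i, (L i).IsHermitian)
    (horth : ∀ i j, inn (L i) (L j) = if i = j then 1 else 0)
    (horthI : ∀ i, inn (L i) 1 = 0)
    (M : Fin s → Matrix (Fin q) (Fin q) ℂ) (hMpos : ∀ m, (M m).PosSemidef)
    (hMsum : ∑ m, M m = 1) (hMtr : ∀ m, 0 < (ρ * M m).trace) :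
    (∑ i, ∑ m, inn (L i) (M m) * inn (L i) (M m) / inn 1 (M m)) ≤ (q : ℂ) - 1 := by
  classical
  have hρh : ρ.IsHermitian := hρ.1
  have hρpsd : ρ.PosSemidef := hρ.posSemidef
  have hMherm : ∀ m, (M m).IsHermitian := fun m => (hMpos m).1
  -- conjugate symmetry
  have hconj : ∀ A B, star (inn A B) = inn B A := by
    intro A B
    rw [hinn, hinn, star_mul', ← Matrix.trace_conjTranspose]
    have h2 : (ρ * (Aᴴ * B + B * Aᴴ))ᴴ = (Bᴴ * A + A * Bᴴ) * ρ := by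
      simp only [Matrix.conjTranspose_mul, Matrix.conjTranspose_add,
        Matrix.conjTranspose_conjTranspose, hρh.eq, Matrix.add_mul]
    rw [h2, Matrix.trace_mul_comm]
    congr 1
    norm_num [Complex.ext_iff]
  -- symmetry for hermitian arguments
  have hsymm : ∀ A B, A.IsHermitian → B.IsHermitian → inn A B = inn B A := by
    intro A B hA hB
    rw [hinn, hinn, hA.eq, hB.eq, add_comm (A * B)]
  have hreal : ∀ A B, A.IsHermitian → B.IsHermitian → inn A B = ((inn A B).re : ℂ) := by
    intro A B hA hB
    have h := hconj A B
    rw [← hsymm A B hA hB] at h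
    exact (Complex.conj_eq_iff_re.mp h).symm
  -- linearity in the second slot
  have hadd : ∀ A B C, inn A (B + C) = inn A B + inn A C := by
    intro A B C
    simp only [hinn, Matrix.mul_add, Matrix.add_mul, Matrix.trace_add]
    ring
  have hsmul : ∀ (r : ℂ) A B, inn A (r • B) = r * inn A B := by
    intro r A B
    simp only [hinn, Matrix.mul_smul, Matrix.smul_mul, ← smul_add, Matrix.trace_smul,
      smul_eq_mul]
    ring
  have hzero : ∀ A, inn A 0 = 0 := by intro A; simp [hinn]
  have hsum : ∀ (A : Matrix (Fin q) (Fin q) ℂ) (f : Fin d → Matrix (Fin q) (Fin q) ℂ),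
      inn A (∑ i, f i) = ∑ i, inn A (f i) := by
    intro A f
    induction (Finset.univ : Finset (Fin d)) using Finset.induction_on with
    | empty => simpa using hzero A
    | insert _ _ hx ih => rw [Finset.sum_insert hx, Finset.sum_insert hx, hadd, ih]
  have hsub : ∀ A B C, inn A (B - C) = inn A B - inn A C := by
    intro A B C
    rw [sub_eq_add_neg, hadd, ← neg_one_smul ℂ C, hsmul]
    ring
  have hsub₁ : ∀ A B C, inn (B - C) A = inn B A - inn C A := by
    intro A B C
    rw [← hconj, hsub, star_sub, hconj, hconj]
  have hinn1 : ∀ B, inn 1 B = (ρ * B).trace := by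
    intro B
    rw [hinn]
    simp only [Matrix.conjTranspose_one, Matrix.one_mul, Matrix.mul_one, Matrix.mul_add,
      Matrix.trace_add]
    ring
  have hinn11 : inn 1 1 = 1 := by rw [hinn1, Matrix.mul_one, hρ1]
  -- positivity of inn A A
  have hpos : ∀ A, 0 ≤ inn A A := by
    intro A
    rw [hinn, Matrix.mul_add, Matrix.trace_add]
    have h1 : 0 ≤ (ρ * (Aᴴ * A)).trace := by
      have hp := psd_trace_nonneg (hρpsd.mul_mul_conjTranspose_same A)
      rwa [Matrix.mul_assoc, Matrix.trace_mul_comm, Matrix.mul_assoc] at hp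
    have h2 : 0 ≤ (ρ * (A * Aᴴ)).trace := by
      have hp := psd_trace_nonneg (hρpsd.mul_mul_conjTranspose_same Aᴴ)
      rw [Matrix.conjTranspose_conjTranspose] at hp
      rwa [Matrix.mul_assoc, Matrix.trace_mul_comm, Matrix.mul_assoc] at hp
    have hhalf : (0:ℂ) ≤ 1/2 := by
      rw [Complex.le_def]; norm_num
    exact mul_nonneg hhalf (add_nonneg h1 h2)
  -- real quantities
  set c : Fin d → Fin s → ℝ := fun i m => (inn (L i) (M m)).re with hc
  set t : Fin s → ℝ := fun m => ((ρ * M m).trace).re with ht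
  set S : Fin s → ℝ := fun m => ((M m).trace).re with hS
  have hcre : ∀ i m, inn (L i) (M m) = (c i m : ℂ) := fun i m =>
    hreal (L i) (M m) (hLh i) (hMherm m)
  have htre : ∀ m, (ρ * M m).trace = (t m : ℂ) := by
    intro m
    have him := (Complex.lt_def.mp (hMtr m)).2
    exact (Complex.ext_iff.mpr ⟨by simp [ht], by simp [← him]⟩).symm
  have htpos : ∀ m, 0 < t m := by
    intro m
    have := (Complex.lt_def.mp (hMtr m)).1
    simpa [ht] using this
  have hSre : ∀ m, (M m).trace = (S m : ℂ) := by
    intro m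
    have him := (Complex.le_def.mp (psd_trace_nonneg (hMpos m))).2
    exact (Complex.ext_iff.mpr ⟨by simp [hS], by simp [← him]⟩).symm
  -- Bessel + key inequality per POVM element
  have bessel : ∀ m, (∑ i, c i m * c i m) + t m * t m ≤ S m * t m := by
    intro m
    set X : Matrix (Fin q) (Fin q) ℂ := (∑ i, (c i m : ℂ) • L i) + (t m : ℂ) • 1 with hX
    have hAX : ∀ A, inn A X = (∑ i, (c i m : ℂ) * inn A (L i)) + (t m : ℂ) * inn A 1 := by
      intro A
      rw [hX, hadd, hsum, hsmul]
      simp only [hsmul]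
    have hLX : ∀ j, inn (L j) X = (c j m : ℂ) := by
      intro j
      rw [hAX]
      simp [horth, horthI]
    have h1L : ∀ i, inn 1 (L i) = 0 := by
      intro i
      rw [← hconj, horthI, star_zero]
    have h1X : inn 1 X = (t m : ℂ) := by
      rw [hAX]
      simp [h1L, hinn11]
    have h1M : inn 1 (M m) = (t m : ℂ) := by rw [hinn1, htre]
    have hML : ∀ i, inn (M m) (L i) = (c i m : ℂ) := by
      intro i
      rw [← hconj, hcre]
      exact Complex.conj_ofReal _
    have hM1 : inn (M m) 1 = (t m : ℂ) := by
      rw [← hconj, h1M]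
      exact Complex.conj_ofReal _
    set K : ℂ := (((∑ i, c i m * c i m) + t m * t m : ℝ) : ℂ) with hK
    have hKs : K = (∑ i, (c i m : ℂ) * (c i m : ℂ)) + (t m : ℂ) * (t m : ℂ) := by
      rw [hK]; push_cast; ring
    have hMX : inn (M m) X = K := by
      rw [hAX, hKs]
      simp only [hML, hM1]
    have hXM : inn X (M m) = K := by
      rw [← hconj, hMX, hK]
      exact Complex.conj_ofReal _
    have hXL : ∀ i, inn X (L i) = (c i m : ℂ) := by
      intro i
      rw [← hconj, hLX]
      exact Complex.conj_ofReal _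
    have hX1 : inn X 1 = (t m : ℂ) := by
      rw [← hconj, h1X]
      exact Complex.conj_ofReal _
    have hXX : inn X X = K := by
      rw [hAX, hKs]
      simp only [hXL, hX1]
    have hRR : inn (M m - X) (M m - X) = inn (M m) (M m) - K := by
      rw [hsub, hsub₁, hsub₁, hXM, hMX, hXX]
      ring
    have hbes : K ≤ inn (M m) (M m) := by
      have h0 := hpos (M m - X)
      rw [hRR] at h0
      exact sub_nonneg.mp h0
    have hMMtr : inn (M m) (M m) = (ρ * (M m * M m)).trace := by
      rw [hinn, (hMherm m).eq, Matrix.mul_add, Matrix.trace_add]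
      ring
    have hkey := key_ineq hρpsd (hMpos m)
    rw [← hMMtr, hSre, htre] at hkey
    have hfin : K ≤ ((S m * t m : ℝ) : ℂ) := by
      calc K ≤ inn (M m) (M m) := hbes
        _ ≤ ((S m : ℂ)) * ((t m : ℂ)) := hkey
        _ = ((S m * t m : ℝ) : ℂ) := by push_cast; ring
    have := (Complex.le_def.mp hfin).1
    simpa [hK] using this
  -- cast the goal to ℝ
  have hgoal : (∑ i, ∑ m, inn (L i) (M m) * inn (L i) (M m) / inn 1 (M m))
      = ((∑ i, ∑ m, c i m * c i m / t m : ℝ) : ℂ) := by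
    push_cast
    refine Finset.sum_congr rfl fun i _ => Finset.sum_congr rfl fun m _ => ?_
    rw [hcre i m, hinn1, htre m]
  rw [hgoal, show (q : ℂ) - 1 = (((q : ℝ) - 1 : ℝ) : ℂ) from by push_cast; ring]
  rw [Complex.real_le_real]
  -- purely real estimate
  rw [Finset.sum_comm]
  have hstep : ∀ m, (∑ i, c i m * c i m / t m) ≤ S m - t m := by
    intro m
    rw [← Finset.sum_div, div_le_iff₀ (htpos m)]
    nlinarith [bessel m]
  calc (∑ m, ∑ i, c i m * c i m / t m) ≤ ∑ m, (S m - t m) :=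
        Finset.sum_le_sum fun m _ => hstep m
    _ = (∑ m, S m) - (∑ m, t m) := by rw [Finset.sum_sub_distrib]
    _ = (q : ℝ) - 1 := by
        have hS' : (∑ m, S m) = (q : ℝ) := by
          have : (∑ m, (M m).trace) = ((1 : Matrix (Fin q) (Fin q) ℂ)).trace := by
            rw [← Matrix.trace_sum, hMsum]
          rw [hS]
          calc (∑ m, ((M m).trace).re) = ((∑ m, (M m).trace)).re := by
                rw [Complex.re_sum]
            _ = (((1 : Matrix (Fin q) (Fin q) ℂ)).trace).re := by rw [this]
            _ = (q : ℝ) := by simp [Matrix.trace_one]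
        have ht' : (∑ m, t m) = 1 := by
          have : (∑ m, (ρ * M m).trace) = ρ.trace := by
            rw [← Matrix.trace_sum, ← Finset.mul_sum, hMsum, Matrix.mul_one]
          rw [ht]
          calc (∑ m, ((ρ * M m).trace).re) = ((∑ m, (ρ * M m).trace)).re := by
                rw [Complex.re_sum]
            _ = (ρ.trace).re := by rw [this]
            _ = 1 := by rw [hρ1]; simp
        rw [hS', ht']
end

section
/- Let H = ℂ², ρ a strictly positive density operator, and let {L¹,…,L^d, I} (1 ≤ d ≤ 3) be orthonormal selfadjoint operators with respect to ⟨A,B⟩_ρ = (1/2)Tr ρ(A*B+BA*). For a unit vector v ∈ ℝ^d, let M^(v) be the PVM given by the spectral decomposition of L_v = Σᵢ vᵢ L^i. Then ĝ(M^(v)) = |v⟩⟨v|, the rank-one projection onto v. -/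
open Matrix ComplexOrder

private lemma idem_trace_aux (A : Matrix (Fin 2) (Fin 2) ℂ) (h : A * A = A)
    (h0 : A ≠ 0) (h1 : A ≠ 1) : A.trace = 1 := by
  have e : ∀ i j, A i 0 * A 0 j + A i 1 * A 1 j = A i j := by
    intro i j
    have : (A * A) i j = A i j := by rw [h]
    simpa [Matrix.mul_apply, Fin.sum_univ_two] using this
  rw [Matrix.trace_fin_two]
  by_contra ht
  have ht' : A 0 0 + A 1 1 - 1 ≠ 0 := sub_ne_zero.mpr ht
  have hb : A 0 1 = 0 := by
    have h2 : A 0 1 * (A 0 0 + A 1 1 - 1) = 0 := by linear_combination (e 0 1)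
    rcases mul_eq_zero.mp h2 with h' | h'
    · exact h'
    · exact absurd h' ht'
  have hc : A 1 0 = 0 := by
    have h2 : A 1 0 * (A 0 0 + A 1 1 - 1) = 0 := by linear_combination (e 1 0)
    rcases mul_eq_zero.mp h2 with h' | h'
    · exact h'
    · exact absurd h' ht'
  have had : A 0 0 = A 1 1 := by
    have h2 : (A 0 0 - A 1 1) * (A 0 0 + A 1 1 - 1) = 0 := by
      linear_combination (e 0 0) - (e 1 1)
    rcases mul_eq_zero.mp h2 with h' | h'
    · exact sub_eq_zero.mp h'
    · exact absurd h' ht'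
  have h2 : A 0 0 * (A 0 0 - 1) = 0 := by
    linear_combination (e 0 0) - A 1 0 * hb
  rcases mul_eq_zero.mp h2 with h' | h'
  · apply h0
    ext i j
    fin_cases i <;> fin_cases j <;> simp [hb, hc, h', ← had, had ▸ h']
  · have ha1 : A 0 0 = 1 := by linear_combination h'
    apply h1
    ext i j
    fin_cases i <;> fin_cases j <;>
      simp [hb, hc, ha1, ← had, Matrix.one_apply, had ▸ ha1]

private lemma trace_rho_proj_ne_zero (ρ P : Matrix (Fin 2) (Fin 2) ℂ) (hρ : ρ.PosDef)
    (hPh : Pᴴ = P) (hPi : P * P = P) (h0 : P ≠ 0) : (ρ * P).trace ≠ 0 := by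
  have key : (ρ * P).trace = ∑ k, star (fun i => P i k) ⬝ᵥ ρ *ᵥ (fun i => P i k) := by
    have h1 : (ρ * P).trace = (Pᴴ * ρ * P).trace := by
      rw [hPh]
      calc (ρ * P).trace = (ρ * (P * P)).trace := by rw [hPi]
        _ = (ρ * P * P).trace := by rw [Matrix.mul_assoc]
        _ = (P * (ρ * P)).trace := by rw [Matrix.trace_mul_comm]
        _ = (P * ρ * P).trace := by rw [Matrix.mul_assoc]
    rw [h1, Matrix.trace]
    apply Finset.sum_congr rfl
    intro k _
    simp only [Matrix.diag_apply, Matrix.mul_apply, Matrix.conjTranspose_apply,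
      dotProduct, Matrix.mulVec, Pi.star_apply, Finset.sum_mul, Finset.mul_sum]
    rw [Finset.sum_comm]
    apply Finset.sum_congr rfl
    intro i _
    apply Finset.sum_congr rfl
    intro j _
    ring
  intro hzero
  rw [key] at hzero
  have hnn : ∀ k ∈ Finset.univ, (0:ℂ) ≤ star (fun i => P i k) ⬝ᵥ ρ *ᵥ (fun i => P i k) :=
    fun k _ => hρ.posSemidef.dotProduct_mulVec_nonneg _
  have hall := (Finset.sum_eq_zero_iff_of_nonneg hnn).mp hzero
  apply h0
  ext i k
  by_contra hik
  have hcol : (fun i => P i k) ≠ 0 := by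
    intro hcol
    exact hik (by simpa using congrFun hcol i)
  have := hρ.dotProduct_mulVec_pos hcol
  rw [hall k (Finset.mem_univ k)] at this
  exact lt_irrefl _ this

/-- Qubit rank-one attainability: let `ρ` be a strictly positive density operator on `ℂ²`,
and let `{L¹,…,L^d, I}` (`1 ≤ d ≤ 3`) be orthonormal selfadjoint operators w.r.t.
`⟨A,B⟩_ρ = (1/2)Tr ρ(A*B+BA*)`. For a unit vector `v ∈ ℝ^d`, if `M` is the PVM given by the
spectral decomposition of `L_v = Σᵢ vᵢ Lⁱ` (a family of pairwise orthogonal selfadjoint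
projections summing to `I` whose span contains `L_v`), then `ĝ(M) = |v⟩⟨v|`. -/
theorem stmt12 {d s : ℕ} (hd1 : 1 ≤ d) (hd3 : d ≤ 3)
    (ρ : Matrix (Fin 2) (Fin 2) ℂ) (hρ : ρ.PosDef) (hρ1 : ρ.trace = 1)
    (inn : Matrix (Fin 2) (Fin 2) ℂ → Matrix (Fin 2) (Fin 2) ℂ → ℂ)
    (hinn : ∀ A B, inn A B = (1 / 2 : ℂ) * (ρ * (Aᴴ * B + B * Aᴴ)).trace)
    (L : Fin d → Matrix (Fin 2) (Fin 2) ℂ) (hLh : ∀ i, (L i).IsHermitian)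
    (horth : ∀ i j, inn (L i) (L j) = if i = j then 1 else 0)
    (horthI : ∀ i, inn (L i) 1 = 0)
    (v : Fin d → ℝ) (hv : ∑ i, v i ^ 2 = 1)
    (M : Fin s → Matrix (Fin 2) (Fin 2) ℂ)
    (hMh : ∀ n, (M n).IsHermitian) (hMproj : ∀ n, M n * M n = M n)
    (hMorth : ∀ n m, n ≠ m → M n * M m = 0) (hMsum : ∑ n, M n = 1)
    (hspan : ∃ c : Fin s → ℝ, ∑ i, (v i : ℂ) • L i = ∑ n, (c n : ℂ) • M n) :
    ∀ i j, (∑ n, inn (L i) (M n) * inn (L j) (M n) / inn 1 (M n)) = ((v i * v j : ℝ) : ℂ) := by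
  classical
  obtain ⟨c, hc⟩ := hspan
  -- bilinearity facts
  have inn_zero : ∀ A, inn A 0 = 0 := by intro A; simp [hinn]
  have inn_add : ∀ A B C, inn A (B + C) = inn A B + inn A C := by
    intro A B C
    simp only [hinn, Matrix.mul_add, Matrix.add_mul, Matrix.trace_add]
    ring_nf
  have inn_smul : ∀ A (t : ℂ) B, inn A (t • B) = t * inn A B := by
    intro A t B
    simp only [hinn, Matrix.mul_smul, Matrix.smul_mul, ← smul_add, Matrix.trace_smul,
      smul_eq_mul]
    ring
  have inn_smul_left : ∀ (r : ℝ) A B, inn ((r:ℂ) • A) B = (r:ℂ) * inn A B := by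
    intro r A B
    simp only [hinn, Matrix.conjTranspose_smul, Complex.star_def, Complex.conj_ofReal,
      Matrix.mul_smul, Matrix.smul_mul, ← smul_add, Matrix.trace_smul, smul_eq_mul]
    ring
  have inn_add_left : ∀ A B C, inn (A + B) C = inn A C + inn B C := by
    intro A B C
    simp only [hinn, Matrix.conjTranspose_add, Matrix.mul_add, Matrix.add_mul,
      Matrix.trace_add]
    ring_nf
  have inn_sum : ∀ A {k : ℕ} (F : Fin k → Matrix (Fin 2) (Fin 2) ℂ),
      inn A (∑ n, F n) = ∑ n, inn A (F n) := by
    intro A k F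
    have : ∀ t : Finset (Fin k), inn A (∑ n ∈ t, F n) = ∑ n ∈ t, inn A (F n) := by
      intro t
      induction t using Finset.induction_on with
      | empty => simp [inn_zero]
      | insert _ _ h ih => rw [Finset.sum_insert h, Finset.sum_insert h, inn_add, ih]
    exact this _
  have inn_sum_left : ∀ B {k : ℕ} (F : Fin k → Matrix (Fin 2) (Fin 2) ℂ),
      inn (∑ n, F n) B = ∑ n, inn (F n) B := by
    intro B k F
    have inn_zero_left : inn 0 B = 0 := by simp [hinn]
    have : ∀ t : Finset (Fin k), inn (∑ n ∈ t, F n) B = ∑ n ∈ t, inn (F n) B := by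
      intro t
      induction t using Finset.induction_on with
      | empty => simpa using inn_zero_left
      | insert _ _ h ih => rw [Finset.sum_insert h, Finset.sum_insert h, inn_add_left, ih]
    exact this _
  have inn_one_left : ∀ B, inn 1 B = (ρ * B).trace := by
    intro B
    rw [hinn]
    simp only [Matrix.conjTranspose_one, Matrix.one_mul, Matrix.mul_one, Matrix.mul_add,
      Matrix.trace_add]
    ring
  -- the operator Lv
  set Lv : Matrix (Fin 2) (Fin 2) ℂ := ∑ i, (v i : ℂ) • L i with hLv
  have inn_one_L : ∀ i, inn 1 (L i) = 0 := by
    intro i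
    have h2 := horthI i
    rw [hinn] at h2 ⊢
    simp only [Matrix.conjTranspose_one, Matrix.one_mul, Matrix.mul_one, (hLh i).eq] at h2 ⊢
    exact h2
  have inn_L_Lv : ∀ i, inn (L i) Lv = (v i : ℂ) := by
    intro i
    rw [hLv, inn_sum]
    simp only [inn_smul, horth, mul_ite, mul_one, mul_zero]
    simp
  have inn_one_Lv : inn 1 Lv = 0 := by
    rw [hLv, inn_sum]
    apply Finset.sum_eq_zero
    intro i _
    rw [inn_smul, inn_one_L, mul_zero]
  have inn_Lv_Lv : inn Lv Lv = 1 := by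
    rw [hLv, inn_sum_left]
    simp only [inn_smul_left, ← hLv, inn_L_Lv]
    have := congrArg (Complex.ofReal) hv
    push_cast at this
    rw [← this]
    apply Finset.sum_congr rfl
    intro i _
    ring
  have inn_one_one : inn 1 1 = 1 := by
    rw [hinn]
    simp only [Matrix.conjTranspose_one, Matrix.one_mul, Matrix.mul_one, Matrix.mul_add,
      Matrix.trace_add, hρ1]
    norm_num
  -- no M n equals 1
  have hnot1 : ∀ n, M n ≠ 1 := by
    intro n h1
    have hzero' : ∀ m, m ≠ n → M m = 0 := by
      intro m hm
      have h2 := hMorth m n hm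
      rwa [h1, mul_one] at h2
    have hLv1 : Lv = (c n : ℂ) • 1 := by
      rw [hc, Finset.sum_eq_single n]
      · rw [h1]
      · intro b _ hb
        rw [hzero' b hb, smul_zero]
      · intro h
        exact absurd (Finset.mem_univ n) h
    have h1' : (0:ℂ) = (c n : ℂ) := by
      rw [← inn_one_Lv, hLv1, inn_smul, inn_one_one, mul_one]
    have h2' : (1:ℂ) = (c n : ℂ) * (c n : ℂ) := by
      rw [← inn_Lv_Lv, hLv1, inn_smul_left, inn_smul, inn_one_one]
      ring
    rw [← h1'] at h2'
    simp at h2'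
  -- the set of nonzero projections has exactly two elements
  set T : Finset (Fin s) := Finset.univ.filter (fun n => M n ≠ 0) with hT
  have hmemT : ∀ n, n ∈ T ↔ M n ≠ 0 := by
    intro n
    simp [hT]
  have htr1 : ∀ n ∈ T, (M n).trace = 1 := by
    intro n hn
    exact idem_trace_aux (M n) (hMproj n) ((hmemT n).mp hn) (hnot1 n)
  have htrsum : ∑ n, (M n).trace = 2 := by
    rw [← Matrix.trace_sum, hMsum, Matrix.trace_one]
    simp
  have hsumT : ∑ n ∈ T, (M n).trace = 2 := by
    rw [← htrsum]
    apply Finset.sum_subset (Finset.subset_univ T)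
    intro x _ hx
    have hx0 : M x = 0 := not_not.mp (fun h => hx ((hmemT x).mpr h))
    rw [hx0, Matrix.trace_zero]
  have hcard : T.card = 2 := by
    have h2 : ((T.card : ℕ) : ℂ) = 2 := by
      rw [← hsumT, Finset.sum_congr rfl htr1]
      simp
    exact_mod_cast h2
  obtain ⟨a, b, hab, hTab⟩ := Finset.card_eq_two.mp hcard
  have haT : a ∈ T := by rw [hTab]; simp
  have hbT : b ∈ T := by rw [hTab]; simp
  have hMa0 : M a ≠ 0 := (hmemT a).mp haT
  have hMb0 : M b ≠ 0 := (hmemT b).mp hbT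
  have hout : ∀ x, x ∉ T → M x = 0 := by
    intro x hx
    by_contra h
    exact hx ((hmemT x).mpr h)
  -- sums over univ reduce to a, b
  have hPQ1 : M a + M b = 1 := by
    rw [← hMsum, ← Finset.sum_pair hab, ← hTab]
    exact Finset.sum_subset (Finset.subset_univ T) (fun x _ hx => hout x hx)
  -- notation
  set u : ℂ := (c a : ℂ) with hu
  set w : ℂ := (c b : ℂ) with hw
  set p : ℂ := inn 1 (M a) with hp
  set q : ℂ := inn 1 (M b) with hq
  have hLvPQ : Lv = u • M a + w • M b := by
    rw [hc]
    rw [show ((c a : ℂ) • M a + (c b : ℂ) • M b : Matrix (Fin 2) (Fin 2) ℂ)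
        = ∑ n ∈ T, (c n : ℂ) • M n by rw [hTab, Finset.sum_pair hab]]
    symm
    apply Finset.sum_subset (Finset.subset_univ T)
    intro x _ hx
    rw [hout x hx, smul_zero]
  have hpq1 : p + q = 1 := by
    rw [hp, hq, ← inn_add, hPQ1, inn_one_one]
  have hp0 : p ≠ 0 := by
    rw [hp, inn_one_left]
    exact trace_rho_proj_ne_zero ρ (M a) hρ (hMh a).eq (hMproj a) hMa0
  have hq0 : q ≠ 0 := by
    rw [hq, inn_one_left]
    exact trace_rho_proj_ne_zero ρ (M b) hρ (hMh b).eq (hMproj b) hMb0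
  have hPQorth : inn (M a) (M b) = 0 := by
    rw [hinn, (hMh a).eq, hMorth a b hab, hMorth b a (Ne.symm hab)]
    simp
  have hQPorth : inn (M b) (M a) = 0 := by
    rw [hinn, (hMh b).eq, hMorth b a (Ne.symm hab), hMorth a b hab]
    simp
  have hPP : inn (M a) (M a) = p := by
    rw [hinn, (hMh a).eq, hMproj a, hp, inn_one_left]
    rw [show M a + M a = M a + M a from rfl]
    rw [Matrix.mul_add, Matrix.trace_add]
    ring
  have hQQ : inn (M b) (M b) = q := by
    rw [hinn, (hMh b).eq, hMproj b, hq, inn_one_left]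
    rw [Matrix.mul_add, Matrix.trace_add]
    ring
  have h0uv : u * p + w * q = 0 := by
    rw [← inn_one_Lv, hLvPQ, inn_add, hu, hw, inn_smul, inn_smul, hp, hq]
  have h1uv : u ^ 2 * p + w ^ 2 * q = 1 := by
    have h' := inn_Lv_Lv
    rw [hLvPQ, inn_add_left, hu, hw, inn_smul_left, inn_smul_left, inn_add, inn_add,
      inn_smul, inn_smul, inn_smul, inn_smul, hPP, hQQ, hPQorth, hQPorth] at h'
    linear_combination h'
  have hkey : (u - w) ^ 2 * (p * q) = 1 := by
    linear_combination (p + q) * h1uv + hpq1 - (u * p + w * q) * h0uv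
  -- relations for the L i coefficients
  have hxy : ∀ i, inn (L i) (M b) = - inn (L i) (M a) := by
    intro i
    have h' : inn (L i) (M a) + inn (L i) (M b) = 0 := by
      rw [← inn_add, hPQ1, horthI i]
    linear_combination h'
  have hveq : ∀ i, (v i : ℂ) = (u - w) * inn (L i) (M a) := by
    intro i
    have h' := inn_L_Lv i
    rw [hLvPQ, inn_add, hu, hw, inn_smul, inn_smul, hxy i] at h'
    linear_combination -h'
  -- final computation
  intro i j
  have hsplit : (∑ n, inn (L i) (M n) * inn (L j) (M n) / inn 1 (M n))
      = inn (L i) (M a) * inn (L j) (M a) / p + inn (L i) (M b) * inn (L j) (M b) / q := by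
    have h1 : (∑ n ∈ T, inn (L i) (M n) * inn (L j) (M n) / inn 1 (M n))
        = ∑ n, inn (L i) (M n) * inn (L j) (M n) / inn 1 (M n) := by
      apply Finset.sum_subset (Finset.subset_univ T)
      intro x _ hx
      rw [hout x hx, inn_zero, inn_zero]
      simp
    rw [← h1, hTab, Finset.sum_pair hab, ← hp, ← hq]
  rw [hsplit, hxy i, hxy j]
  set x : ℂ := inn (L i) (M a)
  set y : ℂ := inn (L j) (M a)
  have hrhs : ((v i * v j : ℝ) : ℂ) = (u - w) ^ 2 * (x * y) := by
    push_cast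
    rw [hveq i, hveq j]
    ring
  rw [hrhs]
  field_simp
  linear_combination (x * y) * hpq1 + ((u - w) ^ 2 * (x * y) * (p * q) - x * y) * hkey
    - (x * y) * ((u - w) ^ 2 * (p * q)) * hkey
end

section
/- A weight H : x ↦ H_x assigning to each nonzero x in the open unit ball of ℝ³ a real symmetric positive definite 3×3 matrix is rotationally symmetric (U* H_{Ux} U = H_x for all U ∈ SO(3)) if and only if there exist functions f, g : (0,1) → (0,∞) such that H_x = f(|x|) I + (g(|x|) − f(|x|)) |x⟩⟨x|/|x|² for all x ≠ 0. -/
open Matrix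

lemma vmv_mulVec (a b u : Fin 3 → ℝ) : (vecMulVec a b).mulVec u = (b ⬝ᵥ u) • a := by
  ext i
  simp only [vecMulVec_apply, mulVec, dotProduct, Pi.smul_apply, smul_eq_mul, of_apply,
    Finset.sum_mul]
  exact Finset.sum_congr rfl fun k _ => by ring

lemma vmv_mul_vmv (a b c d : Fin 3 → ℝ) :
    vecMulVec a b * vecMulVec c d = (b ⬝ᵥ c) • vecMulVec a d := by
  ext i j
  simp only [vecMulVec_apply, mul_apply, dotProduct, Matrix.smul_apply, smul_eq_mul, of_apply,
    Finset.sum_mul, Finset.mul_sum]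
  exact Finset.sum_congr rfl fun k _ => by ring

lemma vmv_transpose (a b : Fin 3 → ℝ) : (vecMulVec a b)ᵀ = vecMulVec b a := by
  ext i j; simp [vecMulVec_apply, mul_comm]

noncomputable def hh (w : Fin 3 → ℝ) : Matrix (Fin 3) (Fin 3) ℝ :=
  1 - (2 / (w ⬝ᵥ w)) • vecMulVec w w

lemma hh_transpose (w : Fin 3 → ℝ) : (hh w)ᵀ = hh w := by
  simp [hh, transpose_sub, transpose_smul, vmv_transpose]

lemma dot_self_pos {w : Fin 3 → ℝ} (hw : w ≠ 0) : 0 < w ⬝ᵥ w := by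
  have h1 : 0 ≤ w ⬝ᵥ w := Finset.sum_nonneg fun i _ => mul_self_nonneg (w i)
  rcases h1.eq_or_lt with h | h
  · exact absurd (dotProduct_self_eq_zero.mp h.symm) hw
  · exact h

lemma hh_mul_self {w : Fin 3 → ℝ} (hw : w ≠ 0) : hh w * hh w = 1 := by
  have hs := (dot_self_pos hw).ne'
  simp only [hh, sub_mul, mul_sub, one_mul, mul_one, Matrix.smul_mul, Matrix.mul_smul,
    vmv_mul_vmv, smul_smul]
  have : (2 / (w ⬝ᵥ w) * (2 / (w ⬝ᵥ w) * (w ⬝ᵥ w))) = 2 / (w ⬝ᵥ w) + 2 / (w ⬝ᵥ w) := by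
    rw [div_mul_cancel₀ _ hs]; ring
  rw [this, add_smul]
  abel

lemma hh_orth {w : Fin 3 → ℝ} (hw : w ≠ 0) : hh w * (hh w)ᵀ = 1 := by
  rw [hh_transpose]; exact hh_mul_self hw

lemma hh_det {w : Fin 3 → ℝ} (hw : w ≠ 0) : (hh w).det = -1 := by
  have hs := (dot_self_pos hw).ne'
  have h1 : hh w = 1 + replicateCol Unit (-(2 / (w ⬝ᵥ w)) • w) * replicateRow Unit w := by
    rw [← vecMulVec_eq, hh]
    ext i j
    simp [vecMulVec_apply]
    ring
  rw [h1, det_one_add_replicateCol_mul_replicateRow]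
  have h2 : w ⬝ᵥ (-(2 / (w ⬝ᵥ w)) • w) = -2 := by
    rw [dotProduct_smul, smul_eq_mul, neg_mul, dotProduct_comm, div_mul_cancel₀ _ hs]
  rw [h2]; ring

lemma hh_fix {w u : Fin 3 → ℝ} (h : w ⬝ᵥ u = 0) : (hh w).mulVec u = u := by
  simp [hh, sub_mulVec, smul_mulVec, vmv_mulVec, h]

lemma hh_swap {u v : Fin 3 → ℝ} (huv : u ≠ v) (h : u ⬝ᵥ u = v ⬝ᵥ v) :
    (hh (u - v)).mulVec u = v := by
  have hw : u - v ≠ 0 := sub_ne_zero_of_ne huv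
  have hs := (dot_self_pos hw).ne'
  simp only [hh, sub_mulVec, one_mulVec, smul_mulVec, vmv_mulVec, smul_smul]
  have hdot : (u - v) ⬝ᵥ u = (u - v) ⬝ᵥ (u - v) / 2 := by
    simp only [sub_dotProduct, dotProduct_sub] at *
    rw [dotProduct_comm v u] at *
    linarith
  rw [hdot]
  have h3 : 2 / ((u - v) ⬝ᵥ (u - v)) * ((u - v) ⬝ᵥ (u - v) / 2) = 1 := by
    rw [div_mul_div_comm, mul_comm]
    exact div_self (by exact mul_ne_zero hs two_ne_zero)
  rw [h3, one_smul, sub_sub_cancel]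

lemma posdef_diag {M : Matrix (Fin 3) (Fin 3) ℝ} (hM : M.PosDef) (i : Fin 3) : 0 < M i i := by
  have := hM.dotProduct_mulVec_pos (x := Pi.single i 1) (by simp [Function.ne_iff])
  simpa [mulVec_single, single_dotProduct] using this

lemma conj_vmv (U : Matrix (Fin 3) (Fin 3) ℝ) (a : Fin 3 → ℝ) :
    U * vecMulVec a a * Uᵀ = vecMulVec (U.mulVec a) (U.mulVec a) := by
  rw [vecMulVec_eq Unit, vecMulVec_eq Unit, replicateCol_mulVec, ← vecMul_transpose, replicateRow_vecMul,
    Matrix.mul_assoc, Matrix.mul_assoc]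
  rw [← Matrix.mul_assoc]

lemma norm_pres {U : Matrix (Fin 3) (Fin 3) ℝ} (hU : Uᵀ * U = 1) (x : Fin 3 → ℝ) :
    (U.mulVec x) ⬝ᵥ (U.mulVec x) = x ⬝ᵥ x := by
  rw [dotProduct_mulVec, ← mulVec_transpose, mulVec_mulVec, hU, one_mulVec]

lemma canonical {A : Matrix (Fin 3) (Fin 3) ℝ} (hsym : Aᵀ = A) {r : ℝ} (hr : r ≠ 0)
    (h2 : (!![1,0,0;0,0,1;0,-1,0] : Matrix (Fin 3) (Fin 3) ℝ) * A * !![1,0,0;0,0,-1;0,1,0] = A)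
    (h3 : (!![1,0,0;0,-1,0;0,0,-1] : Matrix (Fin 3) (Fin 3) ℝ) * A * !![1,0,0;0,-1,0;0,0,-1] = A) :
    A = A 1 1 • 1 + ((A 0 0 - A 1 1) / r ^ 2) • vecMulVec (r • ![1,0,0]) (r • ![1,0,0]) := by
  have e01 := congr_fun (congr_fun h3 0) 1
  have e02 := congr_fun (congr_fun h3 0) 2
  have e11 := congr_fun (congr_fun h2 1) 1
  have e12 := congr_fun (congr_fun h2 1) 2
  have s01 := congr_fun (congr_fun hsym 0) 1
  have s02 := congr_fun (congr_fun hsym 0) 2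
  have s12 := congr_fun (congr_fun hsym 1) 2
  simp [mul_apply, vecMul, dotProduct, Fin.sum_univ_three, transpose_apply] at e01 e02 e11 e12 s01 s02 s12
  have hr2 : (A 0 0 - A 1 1) / r ^ 2 * (r * r) = A 0 0 - A 1 1 := by
    rw [div_mul_eq_mul_div, div_eq_iff (pow_ne_zero 2 hr)]; ring
  ext i j
  fin_cases i <;> fin_cases j <;>
    simp [vecMulVec_apply, one_apply, Matrix.add_apply, Matrix.smul_apply, hr2] <;>
    linarith
lemma exists_rot_aux {u0 x w : Fin 3 → ℝ} (hne : u0 ≠ x) (hn : u0 ⬝ᵥ u0 = x ⬝ᵥ x)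
    (hw : w ≠ 0) (h1 : w ⬝ᵥ u0 = 0) :
    ∃ U : Matrix (Fin 3) (Fin 3) ℝ, U * Uᵀ = 1 ∧ U.det = 1 ∧ U.mulVec u0 = x := by
  have hd : u0 - x ≠ 0 := sub_ne_zero_of_ne hne
  refine ⟨hh (u0 - x) * hh w, ?_, ?_, ?_⟩
  · rw [transpose_mul, Matrix.mul_assoc, ← Matrix.mul_assoc (hh w), hh_orth hw,
      Matrix.one_mul, hh_orth hd]
  · rw [det_mul, hh_det hd, hh_det hw]; ring
  · rw [← mulVec_mulVec, hh_fix h1, hh_swap hne hn]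

lemma exists_rot {x : Fin 3 → ℝ} (hx : x ≠ 0) :
    ∃ U : Matrix (Fin 3) (Fin 3) ℝ, U * Uᵀ = 1 ∧ U.det = 1 ∧
      U.mulVec (Real.sqrt (x ⬝ᵥ x) • ![1,0,0]) = x := by
  set r := Real.sqrt (x ⬝ᵥ x) with hr
  set u0 : Fin 3 → ℝ := r • ![1,0,0] with hu0
  have hxx : 0 < x ⬝ᵥ x := dot_self_pos hx
  have hnorm : u0 ⬝ᵥ u0 = x ⬝ᵥ x := by
    rw [hu0, smul_dotProduct, dotProduct_smul, smul_eq_mul, smul_eq_mul, ← mul_assoc]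
    have : (![1,0,0] : Fin 3 → ℝ) ⬝ᵥ ![1,0,0] = 1 := by
      simp [dotProduct, Fin.sum_univ_three]
    rw [this, mul_one, hr, Real.mul_self_sqrt hxx.le]
  by_cases hex : u0 = x
  · exact ⟨1, by simp, by simp, by rw [one_mulVec, hex]⟩
  · by_cases hc : x 1 = 0 ∧ x 2 = 0
    · refine exists_rot_aux hex hnorm (w := ![0,1,0]) ?_ ?_
      · intro h; simpa using congr_fun h 1
      · simp [hu0, dotProduct, Fin.sum_univ_three]
    · refine exists_rot_aux hex hnorm (w := ![0, -x 2, x 1]) ?_ ?_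
      · intro h
        rw [not_and_or] at hc
        rcases hc with h1 | h2
        · exact h1 (by simpa using congr_fun h 2)
        · exact h2 (by simpa [neg_eq_zero] using congr_fun h 1)
      · simp [hu0, dotProduct, Fin.sum_univ_three]

lemma sum_sq_eq_dot (x : Fin 3 → ℝ) : ∑ i, x i ^ 2 = x ⬝ᵥ x := by
  simp [dotProduct, sq]

-- facts about U2 and U3
section U23
def U2 : Matrix (Fin 3) (Fin 3) ℝ := !![1,0,0;0,0,-1;0,1,0]
def U3 : Matrix (Fin 3) (Fin 3) ℝ := !![1,0,0;0,-1,0;0,0,-1]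

lemma U2_transpose : U2ᵀ = !![1,0,0;0,0,1;0,-1,0] := by
  ext i j; fin_cases i <;> fin_cases j <;> rfl

lemma U3_transpose : U3ᵀ = U3 := by
  ext i j; fin_cases i <;> fin_cases j <;> rfl

lemma U2_orth : U2 * U2ᵀ = 1 := by
  rw [U2_transpose, one_fin_three]; ext i j; fin_cases i <;> fin_cases j <;>
    simp [U2, mul_apply, Fin.sum_univ_three, vecHead, vecTail, Function.comp]

lemma U3_orth : U3 * U3ᵀ = 1 := by
  rw [U3_transpose, one_fin_three]; ext i j; fin_cases i <;> fin_cases j <;>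
    simp [U3, mul_apply, Fin.sum_univ_three, vecHead, vecTail, Function.comp]

lemma U2_det : U2.det = 1 := by
  simp [U2, Matrix.det_fin_three]

lemma U3_det : U3.det = 1 := by
  simp [U3, Matrix.det_fin_three]

lemma U2_fix (r : ℝ) : U2.mulVec (r • ![1,0,0]) = r • ![1,0,0] := by
  ext i; fin_cases i <;> simp [U2, mulVec, dotProduct, Fin.sum_univ_three, vecHead, vecTail, Function.comp]

lemma U3_fix (r : ℝ) : U3.mulVec (r • ![1,0,0]) = r • ![1,0,0] := by
  ext i; fin_cases i <;> simp [U3, mulVec, dotProduct, Fin.sum_univ_three, vecHead, vecTail, Function.comp]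

end U23

/-- A weight `H : x ↦ H_x` assigning to each nonzero `x` in the open unit ball of `ℝ³` a
real symmetric positive definite `3×3` matrix is rotationally symmetric
(`Uᵀ H_{Ux} U = H_x` for all `U ∈ SO(3)`) if and only if there exist functions
`f, g : (0,1) → (0,∞)` such that `H_x = f(|x|) I + (g(|x|) − f(|x|)) |x⟩⟨x|/|x|²`
for all `x ≠ 0` in the ball. -/
theorem stmt16 (H : (Fin 3 → ℝ) → Matrix (Fin 3) (Fin 3) ℝ)
    (hH : ∀ x : Fin 3 → ℝ, x ≠ 0 → ∑ i, x i ^ 2 < 1 → (H x).PosDef) :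
    (∀ U : Matrix (Fin 3) (Fin 3) ℝ, U * Uᵀ = 1 → U.det = 1 →
      ∀ x : Fin 3 → ℝ, x ≠ 0 → ∑ i, x i ^ 2 < 1 →
        Uᵀ * H (U.mulVec x) * U = H x) ↔
    (∃ f g : ℝ → ℝ, (∀ r : ℝ, 0 < r → r < 1 → 0 < f r ∧ 0 < g r) ∧
      ∀ x : Fin 3 → ℝ, x ≠ 0 → ∑ i, x i ^ 2 < 1 →
        H x = f (Real.sqrt (∑ i, x i ^ 2)) • (1 : Matrix (Fin 3) (Fin 3) ℝ) +
          ((g (Real.sqrt (∑ i, x i ^ 2)) - f (Real.sqrt (∑ i, x i ^ 2))) / (∑ i, x i ^ 2)) •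
            vecMulVec x x) := by
  constructor
  · intro hinv
    refine ⟨fun r => H (r • ![1,0,0]) 1 1, fun r => H (r • ![1,0,0]) 0 0, ?_, ?_⟩
    · intro r hr0 hr1
      have hxne : r • ![1,0,0] ≠ (0 : Fin 3 → ℝ) := by
        intro h; exact hr0.ne' (by simpa using congr_fun h 0)
      have hsum : ∑ i, (r • ![1,0,0] : Fin 3 → ℝ) i ^ 2 < 1 := by
        have he : ∑ i, (r • ![1,0,0] : Fin 3 → ℝ) i ^ 2 = r ^ 2 := by
          simp [Fin.sum_univ_three]
        rw [he]; nlinarith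
      have hpd := hH _ hxne hsum
      exact ⟨posdef_diag hpd 1, posdef_diag hpd 0⟩
    · intro x hx hsum
      have hdot : x ⬝ᵥ x = ∑ i, x i ^ 2 := (sum_sq_eq_dot x).symm
      have hspos : 0 < ∑ i, x i ^ 2 := hdot ▸ dot_self_pos hx
      set s := ∑ i, x i ^ 2 with hs
      set r := Real.sqrt s with hrdef
      have hrpos : 0 < r := Real.sqrt_pos.2 hspos
      have hr2 : r ^ 2 = s := Real.sq_sqrt hspos.le
      set u0 : Fin 3 → ℝ := r • ![1,0,0] with hu0
      have hu0ne : u0 ≠ 0 := by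
        intro h; exact hrpos.ne' (by simpa [hu0] using congr_fun h 0)
      have hu0sum : ∑ i, u0 i ^ 2 = s := by
        simp [hu0, Fin.sum_univ_three]
        nlinarith [hr2]
      have hu0lt : ∑ i, u0 i ^ 2 < 1 := by rw [hu0sum]; exact hsum
      -- structure at canonical point
      have hpd := hH u0 hu0ne hu0lt
      have hsym : (H u0)ᵀ = H u0 := by
        have h := hpd.1
        ext i j
        conv_rhs => rw [← h]
        simp [conjTranspose_apply]
      have h2 := hinv U2 U2_orth U2_det u0 hu0ne hu0lt
      rw [U2_fix, U2_transpose] at h2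
      have h3 := hinv U3 U3_orth U3_det u0 hu0ne hu0lt
      rw [U3_fix, U3_transpose] at h3
      have hcan := canonical hsym hrpos.ne' h2 h3
      -- move to x
      obtain ⟨U, hUU, hUdet, hU0x⟩ := exists_rot hx
      rw [hdot, ← hrdef, ← hu0] at hU0x
      have hUU' : Uᵀ * U = 1 := mul_eq_one_comm.mp hUU
      have key := hinv U hUU hUdet u0 hu0ne hu0lt
      rw [hU0x] at key
      have hHx : H x = U * H u0 * Uᵀ := by
        rw [← key, Matrix.mul_assoc, Matrix.mul_assoc (Uᵀ * H x), hUU, Matrix.mul_one,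
          ← Matrix.mul_assoc, hUU, Matrix.one_mul]
      rw [hcan] at hHx
      rw [hHx, Matrix.mul_add, Matrix.add_mul, Matrix.mul_smul, Matrix.smul_mul,
        Matrix.mul_smul, Matrix.smul_mul, Matrix.mul_one, hUU, conj_vmv, hU0x, hr2]
  · rintro ⟨f, g, hfg, hform⟩ U hUU hdet x hx hsum
    have hUU' : Uᵀ * U = 1 := mul_eq_one_comm.mp hUU
    have hUx_ne : U.mulVec x ≠ 0 := by
      intro h
      apply hx
      have := congrArg (Uᵀ.mulVec) h
      rwa [mulVec_mulVec, hUU', one_mulVec, mulVec_zero] at this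
    have hnorm : ∑ i, (U.mulVec x) i ^ 2 = ∑ i, x i ^ 2 := by
      rw [sum_sq_eq_dot, sum_sq_eq_dot, norm_pres hUU']
    have hvmv : Uᵀ * vecMulVec (U.mulVec x) (U.mulVec x) * U = vecMulVec x x := by
      have h := conj_vmv Uᵀ (U.mulVec x)
      rw [transpose_transpose] at h
      rw [h, mulVec_mulVec, hUU', one_mulVec]
    rw [hform _ hUx_ne (by rw [hnorm]; exact hsum), hform x hx hsum, hnorm,
      Matrix.mul_add, Matrix.add_mul, Matrix.mul_smul, Matrix.smul_mul,
      Matrix.mul_smul, Matrix.smul_mul, Matrix.mul_one, hUU', hvmv]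
end

section
/- Let r ∈ (0,1), f, g > 0 reals, t ∈ [0, 2/3]. Define c = (2√f + √((1−r²)g))² and c^T = 3(2f + (1−r²)g) + 3tr²(g−f). Then c^T − c = 2(√((1−r²)g) − √f)² + 3r²(g−f)t and also c^T − c = 2(√((1−r²)f) − √g)² + 3r²(f−g)(2/3 − t); consequently c^T ≥ c. -/
/-- Scalar inequality establishing that the tomography bound dominates the optimal bound:
for `r ∈ (0,1)`, `f, g > 0`, `t ∈ [0, 2/3]`, with `c = (2√f + √((1−r²)g))²` and
`c^T = 3(2f + (1−r²)g) + 3tr²(g−f)`, one has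
`c^T − c = 2(√((1−r²)g) − √f)² + 3r²(g−f)t` and
`c^T − c = 2(√((1−r²)f) − √g)² + 3r²(f−g)(2/3 − t)`; consequently `c ≤ c^T`. -/
theorem stmt18 (r f g t : ℝ) (hr0 : 0 < r) (hr1 : r < 1) (hf : 0 < f) (hg : 0 < g)
    (ht0 : 0 ≤ t) (ht1 : t ≤ 2 / 3)
    (c cT : ℝ)
    (hc : c = (2 * Real.sqrt f + Real.sqrt ((1 - r ^ 2) * g)) ^ 2)
    (hcT : cT = 3 * (2 * f + (1 - r ^ 2) * g) + 3 * t * r ^ 2 * (g - f)) :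
    cT - c = 2 * (Real.sqrt ((1 - r ^ 2) * g) - Real.sqrt f) ^ 2 + 3 * r ^ 2 * (g - f) * t ∧
    cT - c = 2 * (Real.sqrt ((1 - r ^ 2) * f) - Real.sqrt g) ^ 2 +
      3 * r ^ 2 * (f - g) * (2 / 3 - t) ∧
    c ≤ cT := by
  have h1 : (0:ℝ) ≤ 1 - r ^ 2 := by nlinarith
  have ha : Real.sqrt ((1 - r ^ 2) * g) ^ 2 = (1 - r ^ 2) * g :=
    Real.sq_sqrt (mul_nonneg h1 hg.le)
  have hb : Real.sqrt ((1 - r ^ 2) * f) ^ 2 = (1 - r ^ 2) * f :=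
    Real.sq_sqrt (mul_nonneg h1 hf.le)
  have hfs : Real.sqrt f ^ 2 = f := Real.sq_sqrt hf.le
  have hgs : Real.sqrt g ^ 2 = g := Real.sq_sqrt hg.le
  have hcross : Real.sqrt ((1 - r ^ 2) * f) * Real.sqrt g
      = Real.sqrt f * Real.sqrt ((1 - r ^ 2) * g) := by
    rw [← Real.sqrt_mul (mul_nonneg h1 hf.le), ← Real.sqrt_mul hf.le]
    ring_nf
  have e1 : cT - c = 2 * (Real.sqrt ((1 - r ^ 2) * g) - Real.sqrt f) ^ 2
      + 3 * r ^ 2 * (g - f) * t := by subst hc hcT; nlinarith [ha, hfs]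
  have e2 : cT - c = 2 * (Real.sqrt ((1 - r ^ 2) * f) - Real.sqrt g) ^ 2 +
      3 * r ^ 2 * (f - g) * (2 / 3 - t) := by
    subst hc hcT; nlinarith [ha, hb, hfs, hgs, hcross]
  refine ⟨e1, e2, ?_⟩
  rcases le_total f g with h | h
  · nlinarith [sq_nonneg (Real.sqrt ((1 - r ^ 2) * g) - Real.sqrt f), sq_nonneg r]
  · nlinarith [sq_nonneg (Real.sqrt ((1 - r ^ 2) * f) - Real.sqrt g), sq_nonneg r]
end
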